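/- A set system 𝓕 ⊆ 2^[n] is shattering-extremal if and only if the set of standard monomials of the vanishing ideal I(𝓕) ⊴ 𝔽[x_1,…,x_n] is the same for every lexicographic term order (equivalently, for every term order), where 𝔽 is any field. -/

import Mathlib

open MvPolynomial

/-- Monomials of `𝔽[x_1,…,x_n]` identified with their exponent vectors. -/
abbrev Mon (n : ℕ) := Fin n →₀ ℕ

/-- A linear order on monomials is a term order if `1` (i.e. the zero exponent
vector) is minimal and the order is compatible with multiplication by monomials. -/
def IsTermOrder {n : ℕ} (lin : LinearOrder (Mon n)) : Prop :=
  (∀ u : Mon n, lin.le 0 u) ∧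
    ∀ u v w : Mon n, lin.le u v → lin.le (u + w) (v + w)

/-- The strict lexicographic comparison of exponent vectors induced by the variable
ordering `x_{σ 0} ≻ x_{σ 1} ≻ ⋯ ≻ x_{σ (n-1)}`. -/
def lexLt {n : ℕ} (σ : Equiv.Perm (Fin n)) (u v : Mon n) : Prop :=
  ∃ j : Fin n, u (σ j) < v (σ j) ∧ ∀ i : Fin n, i < j → u (σ i) = v (σ i)

/-- `lin` is the lexicographic term order induced by the variable ordering
`x_{σ 0} ≻ x_{σ 1} ≻ ⋯ ≻ x_{σ (n-1)}`. -/
def IsLexOrder {n : ℕ} (σ : Equiv.Perm (Fin n)) (lin : LinearOrder (Mon n)) : Prop :=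
  ∀ u v : Mon n, lin.lt u v ↔ lexLt σ u v

/-- `m` is the leading monomial of `f` with respect to the monomial order `lin`. -/
def IsLeadMon {n : ℕ} {F : Type*} [CommSemiring F] (lin : LinearOrder (Mon n))
    (f : MvPolynomial (Fin n) F) (m : Mon n) : Prop :=
  m ∈ f.support ∧ ∀ m' ∈ f.support, lin.le m' m

/-- The set of standard monomials of an ideal `I` with respect to the monomial
order `lin`: monomials that are not the leading monomial of any nonzero `f ∈ I`. -/
def stdMon {n : ℕ} {F : Type*} [CommSemiring F] (lin : LinearOrder (Mon n))
    (I : Ideal (MvPolynomial (Fin n) F)) : Set (Mon n) :=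
  { m | ¬ ∃ f ∈ I, f ≠ 0 ∧ IsLeadMon lin f m }

/-- The vanishing ideal of a point set `V ⊆ F^n`. -/
def vanishIdeal {n : ℕ} {F : Type*} [CommRing F] (V : Set (Fin n → F)) :
    Ideal (MvPolynomial (Fin n) F) where
  carrier := { f | ∀ v ∈ V, MvPolynomial.eval v f = 0 }
  add_mem' := by
    intro a b ha hb v hv
    simp [map_add, ha v hv, hb v hv]
  zero_mem' := by intro v hv; simp
  smul_mem' := by
    intro c f hf v hv
    simp [smul_eq_mul, hf v hv]

/-- A finite point set (in `{0,…,k-1}^n`, over any field) is extremal if its vanishing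
ideal has the same standard monomials for every lexicographic term order. -/
def IsExtremal {n : ℕ} {F : Type*} [CommRing F] (V : Set (Fin n → F)) : Prop :=
  ∀ (σ₁ σ₂ : Equiv.Perm (Fin n)) (lin₁ lin₂ : LinearOrder (Mon n)),
    IsLexOrder σ₁ lin₁ → IsLexOrder σ₂ lin₂ →
      stdMon lin₁ (vanishIdeal V) = stdMon lin₂ (vanishIdeal V)

/-- Embedding of a point of `{0,…,k-1}^n` into `F^n`. -/
def toField {n k : ℕ} (F : Type*) [Field F] (w : Fin n → Fin k) : Fin n → F :=
  fun i => ((w i : ℕ) : F)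

/-- Identification of a point of `{0,…,k-1}^n` with an exponent vector in `ℕ^n`. -/
noncomputable def toExp {n k : ℕ} (w : Fin n → Fin k) : Mon n :=
  Finsupp.equivFunOnFinite.symm fun i => (w i : ℕ)

/-- The downshift `D_i(V)` of `V ⊆ {0,…,k-1}^n` at coordinate `i`: its `i`-section at
each choice of the other coordinates is `{0,1,…,m-1}` where `m` is the size of the
corresponding `i`-section of `V`. -/
def downshift {n k : ℕ} (V : Finset (Fin n → Fin k)) (i : Fin n) :
    Finset (Fin n → Fin k) :=
  Finset.univ.filter fun w =>
    (w i : ℕ) < (Finset.univ.filter fun α : Fin k => Function.update w i α ∈ V).card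

/-- The iterated downshift `D_{σ(n-1)}(D_{σ(n-2)}(⋯(D_{σ 0}(V))))`,
i.e. downshifts are applied at coordinates `σ 0, σ 1, …, σ (n-1)` in this order. -/
def iterDownshift {n k : ℕ} (σ : Equiv.Perm (Fin n)) (V : Finset (Fin n → Fin k)) :
    Finset (Fin n → Fin k) :=
  (List.ofFn fun j : Fin n => σ j).foldl downshift V

/-- A polynomial is degree dominated (with dominating term `x^w`) if it equals
`x^w + Σ αᵢ x^{vᵢ}` where each `x^{vᵢ}` divides `x^w`. -/
def IsDegDominated {n : ℕ} {F : Type*} [CommSemiring F]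
    (f : MvPolynomial (Fin n) F) : Prop :=
  ∃ w : Mon n, MvPolynomial.coeff w f = 1 ∧ ∀ v ∈ f.support, v ≤ w

/-- `G` is a Gröbner basis of `I` with respect to the monomial order `lin`:
`G ⊆ I` and for every nonzero `f ∈ I` some `g ∈ G` has leading monomial dividing
the leading monomial of `f` (divisibility of monomials being `≤` of exponents). -/
def IsGroebner {n : ℕ} {F : Type*} [CommSemiring F] (lin : LinearOrder (Mon n))
    (G : Finset (MvPolynomial (Fin n) F)) (I : Ideal (MvPolynomial (Fin n) F)) : Prop :=
  (∀ g ∈ G, g ∈ I) ∧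
    ∀ f ∈ I, f ≠ 0 → ∀ m : Mon n, IsLeadMon lin f m →
      ∃ g ∈ G, ∃ mg : Mon n, IsLeadMon lin g mg ∧ mg ≤ m

/-- `G` is a universal Gröbner basis of `I` if it is a Gröbner basis for every term order. -/
def IsUnivGroebner {n : ℕ} {F : Type*} [CommSemiring F]
    (G : Finset (MvPolynomial (Fin n) F)) (I : Ideal (MvPolynomial (Fin n) F)) : Prop :=
  ∀ lin : LinearOrder (Mon n), IsTermOrder lin → IsGroebner lin G I

/-- A term order is an elimination order with respect to `x_i` if `x_i` is greater
than every monomial not involving `x_i`. -/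
def IsElimOrder {n : ℕ} (lin : LinearOrder (Mon n)) (i : Fin n) : Prop :=
  IsTermOrder lin ∧ ∀ m : Mon n, m i = 0 → lin.lt m (Finsupp.single i 1)

/-- A set system `𝓕` shatters `S` if every subset of `S` is the intersection of `S`
with a member of `𝓕`. -/
def Shatters {n : ℕ} (𝓕 : Finset (Finset (Fin n))) (S : Finset (Fin n)) : Prop :=
  ∀ T ⊆ S, ∃ Fm ∈ 𝓕, Fm ∩ S = T

open scoped Classical in
/-- The family `Sh(𝓕)` of sets shattered by `𝓕`. -/
noncomputable def shatteredFamily {n : ℕ} (𝓕 : Finset (Finset (Fin n))) :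
    Finset (Finset (Fin n)) :=
  Finset.univ.filter fun S => Shatters 𝓕 S

/-- A set system is shattering-extremal if it shatters exactly `|𝓕|` sets. -/
def IsSExtremal {n : ℕ} (𝓕 : Finset (Finset (Fin n))) : Prop :=
  (shatteredFamily 𝓕).card = 𝓕.card

/-- The characteristic vector of a set, as a point of `F^n`. -/
def charVec {n : ℕ} (F : Type*) [Field F] (Fm : Finset (Fin n)) : Fin n → F :=
  fun i => if i ∈ Fm then 1 else 0

/-- The squarefree monomial `∏_{i ∈ S} x_i` associated to a set `S ⊆ [n]`,
as an exponent vector. -/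
noncomputable def setMon {n : ℕ} (S : Finset (Fin n)) : Mon n :=
  Finsupp.equivFunOnFinite.symm fun i => if i ∈ S then 1 else 0

/-- The polynomial `f_{S,H} = (∏_{i∈H} x_i) ⬝ ∏_{i∈S∖H} (x_i - 1)`. -/
noncomputable def fSH {n : ℕ} (F : Type*) [Field F] (S H : Finset (Fin n)) :
    MvPolynomial (Fin n) F :=
  (∏ i ∈ H, X i) * ∏ i ∈ S \ H, (X i - 1)

/-- The downshift `D_i(𝓕)` of a set system. -/
def dshiftSet {n : ℕ} (𝓕 : Finset (Finset (Fin n))) (i : Fin n) :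
    Finset (Finset (Fin n)) :=
  𝓕.image (fun Fm => Fm.erase i) ∪ 𝓕.filter fun Fm => i ∈ Fm ∧ Fm.erase i ∈ 𝓕

/-- The iterated downshift `D_{σ(n-1)}(⋯(D_{σ 0}(𝓕)))` of a set system:
downshifts are applied at `σ 0, σ 1, …, σ (n-1)` in this order. -/
def iterDshiftSet {n : ℕ} (σ : Equiv.Perm (Fin n)) (𝓕 : Finset (Finset (Fin n))) :
    Finset (Finset (Fin n)) :=
  (List.ofFn fun j : Fin n => σ j).foldl dshiftSet 𝓕

/-- Restriction of an exponent vector in `ℕ^{n+1}` to its first `n` coordinates. -/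
noncomputable def restrictMon {n : ℕ} (w : Mon (n + 1)) : Mon n :=
  Finsupp.equivFunOnFinite.symm fun i => w i.castSucc

section Aux
open Finset

variable {n : ℕ}

theorem linLe_of_lt {α : Type*} (lin : LinearOrder α) {a b : α} (h : lin.lt a b) :
    lin.le a b := ((lin.lt_iff_le_not_ge a b).1 h).1

theorem linLt_of_le_ne {α : Type*} (lin : LinearOrder α) {a b : α} (h : lin.le a b)
    (hne : a ≠ b) : lin.lt a b :=
  (lin.lt_iff_le_not_ge a b).2 ⟨h, fun hba => hne (lin.le_antisymm a b h hba)⟩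

theorem linLe_iff {α : Type*} (lin : LinearOrder α) {a b : α} :
    lin.le a b ↔ a = b ∨ lin.lt a b := by
  constructor
  · intro h
    rcases eq_or_ne a b with rfl | hne
    · exact Or.inl rfl
    · exact Or.inr (linLt_of_le_ne lin h hne)
  · rintro (rfl | h)
    · exact lin.le_refl a
    · exact linLe_of_lt lin h

theorem linLt_ne {α : Type*} (lin : LinearOrder α) {a b : α} (h : lin.lt a b) : a ≠ b := by
  rintro rfl
  exact ((lin.lt_iff_le_not_ge a a).1 h).2 (lin.le_refl a)

/-- A maximum of a nonempty finset with respect to an explicit linear order. -/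
theorem exists_linMax {α : Type*} (lin : LinearOrder α) {s : Finset α} (hs : s.Nonempty) :
    ∃ m ∈ s, ∀ x ∈ s, lin.le x m := by
  letI := lin
  obtain ⟨b, hb, hball⟩ := s.exists_max_image id hs
  exact ⟨b, hb, hball⟩

theorem IsTermOrder.le_of_le {lin : LinearOrder (Mon n)} (h : IsTermOrder lin)
    {u v : Mon n} (huv : u ≤ v) : lin.le u v := by
  have := h.2 0 (v - u) u (h.1 _)
  rwa [zero_add, tsub_add_cancel_of_le huv] at this

theorem IsTermOrder.lt_of_lt {lin : LinearOrder (Mon n)} (h : IsTermOrder lin)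
    {u v : Mon n} (huv : u ≤ v) (hne : u ≠ v) : lin.lt u v :=
  linLt_of_le_ne lin (h.le_of_le huv) hne

/-- The lexicographic comparison is irreflexive, transitive, trichotomous. -/
theorem lexLt_isSTO (σ : Equiv.Perm (Fin n)) : IsStrictTotalOrder (Mon n) (lexLt σ) := by
  refine { trichotomous := ?_, irrefl := ?_, trans := ?_ }
  · -- trichotomous
    intro u v
    suffices H : lexLt σ u v ∨ u = v ∨ lexLt σ v u by
      intro h1 h2; rcases H with h | h | h
      exacts [absurd h h1, h, absurd h h2]
    by_cases huv : u = v
    · exact Or.inr (Or.inl huv)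
    · have hne : {j : Fin n | u (σ j) ≠ v (σ j)}.toFinset.Nonempty := by
        rw [Set.toFinset_nonempty]
        by_contra hemp
        simp only [Set.not_nonempty_iff_eq_empty, Set.eq_empty_iff_forall_notMem,
          Set.mem_setOf_eq, not_not] at hemp
        apply huv
        ext i
        simpa using hemp (σ.symm i)
      have hmem : ({j : Fin n | u (σ j) ≠ v (σ j)}.toFinset).min' hne ∈
          {j : Fin n | u (σ j) ≠ v (σ j)}.toFinset := Finset.min'_mem _ hne
      set j := ({j : Fin n | u (σ j) ≠ v (σ j)}.toFinset).min' hne with hjdef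
      have hne' : u (σ j) ≠ v (σ j) := by simpa using hmem
      have heq : ∀ i : Fin n, i < j → u (σ i) = v (σ i) := by
        intro i hi
        by_contra hcon
        have : j ≤ i := Finset.min'_le _ _ (by simpa using hcon)
        exact absurd hi (not_lt.mpr this)
      rcases lt_or_gt_of_ne hne' with h | h
      · exact Or.inl ⟨j, h, heq⟩
      · exact Or.inr (Or.inr ⟨j, h, fun i hi => (heq i hi).symm⟩)
  · -- irrefl
    rintro u ⟨j, hj, -⟩
    exact lt_irrefl _ hj
  · -- trans
    rintro u v w ⟨j1, hj1, he1⟩ ⟨j2, hj2, he2⟩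
    rcases lt_trichotomy j1 j2 with h | h | h
    · exact ⟨j1, by rw [← he2 _ h]; exact hj1, fun i hi => (he1 i hi).trans (he2 i (hi.trans h))⟩
    · subst h; exact ⟨j1, hj1.trans hj2, fun i hi => (he1 i hi).trans (he2 i hi)⟩
    · exact ⟨j2, by rw [he1 _ h]; exact hj2, fun i hi => (he1 i (hi.trans h)).trans (he2 i hi)⟩

/-- An explicit lexicographic linear order for each permutation. -/
noncomputable def lexLin (σ : Equiv.Perm (Fin n)) : LinearOrder (Mon n) :=
  letI := lexLt_isSTO σ
  letI : DecidableRel (lexLt σ) := Classical.decRel _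
  linearOrderOfSTO (lexLt σ)

theorem isLexOrder_lexLin (σ : Equiv.Perm (Fin n)) : IsLexOrder σ (lexLin σ) :=
  fun _ _ => Iff.rfl

theorem IsLexOrder.isTermOrder {σ : Equiv.Perm (Fin n)} {lin : LinearOrder (Mon n)}
    (h : IsLexOrder σ lin) : IsTermOrder lin := by
  constructor
  · intro u
    rcases eq_or_ne (0 : Mon n) u with rfl | hne
    · exact lin.le_refl _
    · apply linLe_of_lt
      refine (h _ _).mpr ?_
      have hne' : {j : Fin n | u (σ j) ≠ 0}.toFinset.Nonempty := by
        rw [Set.toFinset_nonempty]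
        by_contra hemp
        simp only [Set.not_nonempty_iff_eq_empty, Set.eq_empty_iff_forall_notMem,
          Set.mem_setOf_eq, not_not] at hemp
        refine hne ?_
        ext i
        simpa using (hemp (σ.symm i)).symm
      set j := ({j : Fin n | u (σ j) ≠ 0}.toFinset).min' hne' with hjdef
      have hmem : j ∈ {j : Fin n | u (σ j) ≠ 0}.toFinset := Finset.min'_mem _ hne'
      refine ⟨j, ?_, fun i hi => ?_⟩
      · simp only [Set.mem_toFinset, Set.mem_setOf_eq] at hmem
        simpa using Nat.pos_of_ne_zero hmem
      · by_contra hcon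
        have hmem2 : i ∈ {j : Fin n | u (σ j) ≠ 0}.toFinset := by
          simp only [Set.mem_toFinset, Set.mem_setOf_eq]
          intro hc
          exact hcon (by simp [hc])
        exact absurd hi (not_lt.mpr (Finset.min'_le _ _ hmem2))
  · intro u v w huv
    rcases eq_or_ne u v with rfl | hne
    · exact lin.le_refl _
    · apply linLe_of_lt
      refine (h _ _).mpr ?_
      have hlt : lexLt σ u v := (h u v).mp (linLt_of_le_ne lin huv hne)
      obtain ⟨j, hj, he⟩ := hlt
      refine ⟨j, ?_, fun i hi => ?_⟩
      · simpa using Nat.add_lt_add_right hj (w (σ j))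
      · simp [he i hi]

end Aux
section Aux2
open Finset
open scoped Classical

variable {n : ℕ} {F : Type*} [Field F]

theorem setMon_apply (S : Finset (Fin n)) (i : Fin n) :
    setMon S i = if i ∈ S then 1 else 0 := rfl

theorem setMon_support (S : Finset (Fin n)) : (setMon S).support = S := by
  ext i
  simp only [Finsupp.mem_support_iff, setMon_apply]
  split <;> simp_all

theorem setMon_injective : Function.Injective (setMon (n := n)) := by
  intro S T h
  rw [← setMon_support S, ← setMon_support T, h]

theorem setMon_mono {S T : Finset (Fin n)} (h : S ⊆ T) : setMon S ≤ setMon T := by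
  intro i
  rw [setMon_apply, setMon_apply]
  split
  · rename_i hi; simp [h hi]
  · simp

theorem eq_setMon_of_le {u : Mon n} {S : Finset (Fin n)} (h : u ≤ setMon S) :
    u = setMon u.support ∧ u.support ⊆ S := by
  constructor
  · ext i
    rw [setMon_apply]
    have := h i
    rw [setMon_apply] at this
    by_cases hi : u i = 0
    · simp [hi, Finsupp.mem_support_iff]
    · rw [if_pos (Finsupp.mem_support_iff.mpr hi)]
      split at this
      · omega
      · omega
  · intro i hi
    rw [Finsupp.mem_support_iff] at hi
    have := h i
    rw [setMon_apply] at this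
    by_contra hc
    rw [if_neg hc] at this
    omega

theorem setMon_insert {a : Fin n} {S : Finset (Fin n)} (ha : a ∉ S) :
    setMon (insert a S) = Finsupp.single a 1 + setMon S := by
  ext i
  rw [Finsupp.add_apply, setMon_apply, setMon_apply, Finsupp.single_apply]
  by_cases h1 : i = a
  · subst h1; simp [ha]
  · simp [h1, Ne.symm h1]

/-- Points with 0/1 coordinates. -/
def Is01 (v : Fin n → F) : Prop := ∀ i, v i = 0 ∨ v i = 1

theorem charVec_is01 (Fm : Finset (Fin n)) : Is01 (charVec F Fm) := by
  intro i
  unfold charVec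
  split <;> simp

theorem charVec_injective : Function.Injective (charVec (n := n) F) := by
  intro S T h
  ext i
  have := congrFun h i
  unfold charVec at this
  by_contra hc
  rcases Decidable.em (i ∈ S) with h1 | h1 <;> rcases Decidable.em (i ∈ T) with h2 | h2 <;>
    simp [h1, h2] at this hc <;> exact one_ne_zero (F := F) (by simp [this])

theorem pow_01 {x : F} (hx : x = 0 ∨ x = 1) {k : ℕ} (hk : k ≠ 0) : x ^ k = x := by
  rcases hx with rfl | rfl
  · simp [zero_pow hk]
  · simp

/-- Evaluation of a monomial at a 0/1 point only depends on the support. -/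
theorem eval_monomial_01 {v : Fin n → F} (hv : Is01 v) (u : Mon n) (c : F) :
    eval v (monomial u c) = c * ∏ i ∈ u.support, v i := by
  rw [eval_monomial]
  congr 1
  rw [Finsupp.prod]
  exact Finset.prod_congr rfl fun i hi => pow_01 (hv i) (Finsupp.mem_support_iff.mp hi)

theorem prod_charVec (H : Finset (Fin n)) (A : Finset (Fin n)) :
    (∏ i ∈ A, charVec F H i) = if A ⊆ H then 1 else 0 := by
  by_cases hAH : A ⊆ H
  · rw [if_pos hAH]
    apply Finset.prod_eq_one
    intro i hi
    simp [charVec, hAH hi]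
  · rw [if_neg hAH]
    obtain ⟨i, hiA, hiH⟩ := Finset.not_subset.mp hAH
    apply Finset.prod_eq_zero hiA
    simp [charVec, hiH]

end Aux2
section Aux3
open Finset
open scoped Classical

variable {n : ℕ} {F : Type*} [Field F]

theorem mem_vanishIdeal_iff {V : Set (Fin n → F)} {f : MvPolynomial (Fin n) F} :
    f ∈ vanishIdeal V ↔ ∀ v ∈ V, eval v f = 0 := Iff.rfl

/-- Support and leading coefficient of a product of "affine" factors. -/
theorem prod_factor_bound (S : Finset (Fin n)) (g : Fin n → MvPolynomial (Fin n) F)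
    (hs : ∀ i ∈ S, (g i).support ⊆ {Finsupp.single i 1, 0}) :
    (∀ m ∈ (∏ i ∈ S, g i).support, m ≤ setMon S) ∧
      ((∀ i ∈ S, coeff (Finsupp.single i 1) (g i) = 1) →
        coeff (setMon S) (∏ i ∈ S, g i) = 1) := by
  classical
  induction S using Finset.induction_on with
  | empty =>
    constructor
    · intro m hm
      rw [Finset.prod_empty] at hm
      rw [MvPolynomial.mem_support_iff, MvPolynomial.coeff_one] at hm
      by_cases h0 : (0 : Mon n) = m
      · subst h0; exact zero_le
      · rw [if_neg h0] at hm; simp at hm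
    · intro _
      rw [Finset.prod_empty]
      have : setMon (∅ : Finset (Fin n)) = 0 := by
        ext i; simp [setMon_apply]
      rw [this]
      simp
  | @insert a S ha ih =>
    have ihs := ih (fun i hi => hs i (Finset.mem_insert_of_mem hi))
    rw [Finset.prod_insert ha]
    have hsupp : ∀ m ∈ (g a * ∏ i ∈ S, g i).support, m ≤ setMon (insert a S) := by
      intro m hm
      have := MvPolynomial.support_mul _ _ hm
      rw [Finset.mem_add] at this
      obtain ⟨u, hu, v, hv, rfl⟩ := this
      have hu' : u ≤ Finsupp.single a 1 := by
        rcases Finset.mem_insert.mp (hs a (Finset.mem_insert_self a S) hu) with rfl | h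
        · exact le_refl _
        · simp only [Finset.mem_singleton] at h
          subst h
          exact zero_le
      rw [setMon_insert ha]
      exact add_le_add hu' (ihs.1 v hv)
    refine ⟨hsupp, fun hc => ?_⟩
    rw [setMon_insert ha, MvPolynomial.coeff_mul]
    rw [Finset.sum_eq_single (Finsupp.single a 1, setMon S)]
    · rw [hc a (Finset.mem_insert_self a S), ihs.2 fun i hi => hc i (Finset.mem_insert_of_mem hi)]
      simp
    · rintro ⟨u, v⟩ hmem hne
      rw [Finset.HasAntidiagonal.mem_antidiagonal] at hmem
      by_cases hu : coeff u (g a) = 0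
      · rw [hu, zero_mul]
      by_cases hv : coeff v (∏ i ∈ S, g i) = 0
      · rw [hv, mul_zero]
      exfalso
      have hu' := hs a (Finset.mem_insert_self a S) (MvPolynomial.mem_support_iff.mpr hu)
      have hv' := ihs.1 v (MvPolynomial.mem_support_iff.mpr hv)
      rcases Finset.mem_insert.mp hu' with rfl | h
      · exact hne (by rw [Prod.mk.injEq]; exact ⟨rfl, by exact add_left_cancel hmem⟩)
      · simp only [Finset.mem_singleton] at h
        subst h
        have hmem' : v = Finsupp.single a 1 + setMon S := by simpa using hmem
        have h1 : v a = Finsupp.single a 1 a + setMon S a := by rw [hmem']; rfl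
        have h2 : setMon S a = 0 := by rw [setMon_apply, if_neg ha]
        rw [Finsupp.single_eq_same, h2] at h1
        have := hv' a
        rw [setMon_apply, if_neg ha] at this
        omega
    · intro hmem
      exfalso
      exact hmem (Finset.HasAntidiagonal.mem_antidiagonal.mpr rfl)

theorem support_X_sub_one (i : Fin n) :
    (X i - 1 : MvPolynomial (Fin n) F).support ⊆ {Finsupp.single i 1, 0} := by
  intro u hu
  rw [MvPolynomial.mem_support_iff, MvPolynomial.coeff_sub, MvPolynomial.coeff_X',
    MvPolynomial.coeff_one] at hu
  simp only [Finset.mem_insert, Finset.mem_singleton]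
  by_contra hc
  push_neg at hc
  rw [if_neg (fun h => hc.1 h.symm), if_neg (fun h => hc.2 h.symm)] at hu
  simp at hu

theorem coeff_X_sub_one (i : Fin n) :
    coeff (Finsupp.single i 1) (X i - 1 : MvPolynomial (Fin n) F) = 1 := by
  rw [MvPolynomial.coeff_sub, MvPolynomial.coeff_X', MvPolynomial.coeff_one,
    if_pos rfl, if_neg (fun h : (0:Mon n) = Finsupp.single i 1 => by
      have := DFunLike.congr_fun h i
      simp at this)]
  simp

theorem fSH_eq_prod {S H : Finset (Fin n)} (hH : H ⊆ S) :
    fSH F S H = ∏ i ∈ S, (if i ∈ H then X i else X i - 1) := by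
  have h1 : S = H ∪ (S \ H) := (Finset.union_sdiff_of_subset hH).symm
  rw [fSH]
  conv_rhs => rw [h1]
  rw [Finset.prod_union disjoint_sdiff]
  congr 1
  · exact Finset.prod_congr rfl fun i hi => by rw [if_pos hi]
  · exact Finset.prod_congr rfl fun i hi => by
      rw [if_neg (Finset.mem_sdiff.mp hi).2]

theorem fSH_support {S H : Finset (Fin n)} (hH : H ⊆ S) :
    (∀ m ∈ (fSH F S H).support, m ≤ setMon S) ∧ coeff (setMon S) (fSH F S H) = 1 := by
  rw [fSH_eq_prod hH]
  set g : Fin n → MvPolynomial (Fin n) F := fun i => if i ∈ H then X i else X i - 1 with hg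
  have hgs : ∀ i ∈ S, (g i).support ⊆ {Finsupp.single i 1, 0} := by
    intro i _
    by_cases hi : i ∈ H
    · rw [hg]
      simp only [if_pos hi]
      rw [MvPolynomial.support_X]
      intro u hu
      simp only [Finset.mem_singleton] at hu
      simp [hu]
    · rw [hg]
      simp only [if_neg hi]
      exact support_X_sub_one i
  have := prod_factor_bound S g hgs
  refine ⟨this.1, this.2 fun i _ => ?_⟩
  by_cases hi : i ∈ H
  · rw [hg]
    simp only [if_pos hi]
    rw [MvPolynomial.coeff_X']
    simp
  · rw [hg]
    simp only [if_neg hi]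
    exact coeff_X_sub_one i

end Aux3
section Aux4
open Finset
open scoped Classical

variable {n : ℕ} {F : Type*} [Field F]

theorem isLeadMon_of_bound {lin : LinearOrder (Mon n)} (h : IsTermOrder lin)
    {f : MvPolynomial (Fin n) F} {w : Mon n} (hw : coeff w f ≠ 0)
    (hb : ∀ m ∈ f.support, m ≤ w) : IsLeadMon lin f w :=
  ⟨MvPolynomial.mem_support_iff.mpr hw, fun m hm => h.le_of_le (hb m hm)⟩

theorem mem_image_charVec {𝓕 : Finset (Finset (Fin n))} {v : Fin n → F} :
    v ∈ ((𝓕.image (charVec F) : Finset (Fin n → F)) : Set (Fin n → F)) ↔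
      ∃ Fm ∈ 𝓕, charVec F Fm = v := by
  simp

theorem fSH_mem_vanishIdeal {𝓕 : Finset (Finset (Fin n))} {S H : Finset (Fin n)}
    (hH : H ⊆ S) (h : ∀ Fm ∈ 𝓕, Fm ∩ S ≠ H) :
    fSH F S H ∈ vanishIdeal ((𝓕.image (charVec F) : Finset (Fin n → F)) : Set (Fin n → F)) := by
  rw [mem_vanishIdeal_iff]
  intro v hv
  obtain ⟨Fm, hFm, rfl⟩ := mem_image_charVec.mp hv
  rw [fSH, map_mul, map_prod, map_prod]
  by_contra hc
  obtain ⟨h1, h2⟩ := mul_ne_zero_iff.mp hc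
  rw [Finset.prod_ne_zero_iff] at h1 h2
  have hFmH : ∀ i ∈ H, i ∈ Fm := by
    intro i hi
    have := h1 i hi
    rw [eval_X] at this
    by_contra hins
    simp [charVec, hins] at this
  have hFmS : ∀ i ∈ S \ H, i ∉ Fm := by
    intro i hi
    have := h2 i hi
    rw [map_sub, eval_X, map_one] at this
    by_contra hins
    simp [charVec, hins] at this
  apply h Fm hFm
  ext i
  simp only [Finset.mem_inter]
  constructor
  · rintro ⟨hiF, hiS⟩
    by_contra hiH
    exact hFmS i (Finset.mem_sdiff.mpr ⟨hiS, hiH⟩) hiF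
  · intro hiH
    exact ⟨hFmH i hiH, hH hiH⟩

/-- Every standard monomial (for a term order) is the monomial of a shattered set. -/
theorem stdMon_subset_shattered {lin : LinearOrder (Mon n)} (hlin : IsTermOrder lin)
    (𝓕 : Finset (Finset (Fin n))) {m : Mon n}
    (hm : m ∈ stdMon lin (vanishIdeal
      ((𝓕.image (charVec F) : Finset (Fin n → F)) : Set (Fin n → F)))) :
    ∃ S : Finset (Fin n), _root_.Shatters 𝓕 S ∧ setMon S = m := by
  rw [stdMon, Set.mem_setOf_eq] at hm
  -- m is squarefree
  have hsf : ∀ i, m i ≤ 1 := by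
    intro i
    by_contra hge
    push_neg at hge
    set m' : Mon n := m - Finsupp.single i 1 with hm'
    have hm'ne : m' ≠ m := by
      intro hc
      have := DFunLike.congr_fun hc i
      rw [hm'] at this
      simp only [Finsupp.tsub_apply, Finsupp.single_eq_same] at this
      omega
    have hm'supp : m'.support = m.support := by
      ext j
      simp only [Finsupp.mem_support_iff, hm', Finsupp.tsub_apply, Finsupp.single_apply]
      by_cases hj : i = j
      · subst hj; rw [if_pos rfl]; omega
      · rw [if_neg hj]; omega
    set f : MvPolynomial (Fin n) F := monomial m 1 - monomial m' 1 with hf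
    have hcm : ∀ u, coeff u f = (if m = u then (1:F) else 0) - (if m' = u then 1 else 0) := by
      intro u
      rw [hf, MvPolynomial.coeff_sub, MvPolynomial.coeff_monomial, MvPolynomial.coeff_monomial]
    have hcoeff : coeff m f = 1 := by
      rw [hcm m, if_pos rfl, if_neg hm'ne]
      simp
    apply hm
    refine ⟨f, ?_, ?_, ?_⟩
    · rw [mem_vanishIdeal_iff]
      intro v hv
      obtain ⟨Fm, _, rfl⟩ := mem_image_charVec.mp hv
      rw [hf, map_sub, eval_monomial_01 (charVec_is01 Fm),
        eval_monomial_01 (charVec_is01 Fm), hm'supp]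
      ring
    · intro hc
      rw [hc] at hcoeff
      simp at hcoeff
    · refine isLeadMon_of_bound hlin (by rw [hcoeff]; exact one_ne_zero) ?_
      intro u hu
      rw [MvPolynomial.mem_support_iff, hcm u] at hu
      by_cases h1 : m = u
      · exact h1 ▸ le_refl m
      · rw [if_neg h1] at hu
        by_cases h2 : m' = u
        · subst h2
          rw [hm']
          exact tsub_le_self
        · rw [if_neg h2] at hu
          simp at hu
  have hmsf : m = setMon m.support := by
    ext i
    rw [setMon_apply]
    by_cases hi : m i = 0
    · rw [if_neg (by simp [Finsupp.mem_support_iff, hi]), hi]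
    · rw [if_pos (Finsupp.mem_support_iff.mpr hi)]
      have := hsf i
      omega
  refine ⟨m.support, ?_, hmsf.symm⟩
  by_contra hsh
  unfold _root_.Shatters at hsh
  push_neg at hsh
  obtain ⟨H, hHS, hH⟩ := hsh
  apply hm
  have hfs := fSH_support (F := F) hHS
  refine ⟨fSH F m.support H, fSH_mem_vanishIdeal hHS hH, ?_, ?_⟩
  · intro hc
    have := hfs.2
    rw [hc] at this
    simp at this
  · have hL : IsLeadMon lin (fSH F m.support H) (setMon m.support) :=
      isLeadMon_of_bound hlin (by rw [hfs.2]; exact one_ne_zero) hfs.1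
    rwa [← hmsf] at hL

end Aux4
section Aux5
open Finset
open scoped Classical

variable {n : ℕ} {F : Type*} [Field F]

theorem inner_alt_sum (S A : Finset (Fin n)) (hA : A ⊆ S) :
    ∑ H ∈ S.powerset.filter (fun H => A ⊆ H), (-1:F)^((S \ H).card)
      = if A = S then 1 else 0 := by
  rw [Finset.sum_nbij' (i := fun H => S \ H) (j := fun U => S \ U)
    (t := (S \ A).powerset) (g := fun U => (-1:F)^U.card)]
  · have h1 : ((∑ U ∈ (S \ A).powerset, (-1:ℤ)^U.card : ℤ) : F)
        = ((if S \ A = ∅ then 1 else 0 : ℤ) : F) := by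
      rw [Finset.sum_powerset_neg_one_pow_card]
    push_cast at h1
    rw [h1]
    have h2 : (S \ A = ∅) = (A = S) := by
      rw [eq_iff_iff]
      constructor
      · intro hc
        refine Finset.Subset.antisymm hA fun x hx => ?_
        by_contra hxA
        exact (Finset.eq_empty_iff_forall_notMem.mp hc x) (Finset.mem_sdiff.mpr ⟨hx, hxA⟩)
      · intro hc
        subst hc
        simp
    by_cases h : S \ A = ∅
    · rw [if_pos h, if_pos (by rw [h2] at h; exact h)]
    · rw [if_neg h, if_neg (by rw [h2] at h; exact h)]
  · intro H hH
    simp only [Finset.mem_filter, Finset.mem_powerset] at hH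
    rw [Finset.mem_powerset]
    exact Finset.sdiff_subset_sdiff (le_refl S) hH.2
  · intro U hU
    rw [Finset.mem_powerset] at hU
    simp only [Finset.mem_filter, Finset.mem_powerset]
    constructor
    · exact Finset.sdiff_subset
    · intro x hx
      rw [Finset.mem_sdiff]
      have := hU
      refine ⟨hA hx, fun hc => ?_⟩
      exact (Finset.mem_sdiff.mp (hU hc)).2 hx
  · intro H hH
    simp only [Finset.mem_filter, Finset.mem_powerset] at hH
    exact Finset.sdiff_sdiff_eq_self hH.1
  · intro U hU
    rw [Finset.mem_powerset] at hU
    exact Finset.sdiff_sdiff_eq_self (hU.trans Finset.sdiff_subset)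
  · intro H _
    rfl

theorem alt_sum_eval (S : Finset (Fin n)) (f : MvPolynomial (Fin n) F)
    (hf : ∀ u ∈ f.support, u.support ⊆ S) :
    ∑ H ∈ S.powerset, (-1:F)^((S \ H).card) * eval (charVec F H) f
      = ∑ u ∈ f.support.filter (fun u => u.support = S), coeff u f := by
  have heval : ∀ H : Finset (Fin n), eval (charVec F H) f
      = ∑ u ∈ f.support, coeff u f * (if u.support ⊆ H then 1 else 0) := by
    intro H
    rw [MvPolynomial.eval_eq]
    refine Finset.sum_congr rfl fun u hu => ?_
    congr 1
    rw [← prod_charVec H u.support]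
    exact Finset.prod_congr rfl fun i hi =>
      pow_01 (charVec_is01 H i) (Finsupp.mem_support_iff.mp hi)
  calc ∑ H ∈ S.powerset, (-1:F)^((S \ H).card) * eval (charVec F H) f
      = ∑ H ∈ S.powerset, ∑ u ∈ f.support,
          coeff u f * ((-1:F)^((S \ H).card) * (if u.support ⊆ H then 1 else 0)) := by
        refine Finset.sum_congr rfl fun H _ => ?_
        rw [heval H, Finset.mul_sum]
        exact Finset.sum_congr rfl fun u _ => by ring
    _ = ∑ u ∈ f.support, coeff u f *
          (∑ H ∈ S.powerset, (-1:F)^((S \ H).card) * (if u.support ⊆ H then 1 else 0)) := by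
        rw [Finset.sum_comm]
        exact Finset.sum_congr rfl fun u _ => by rw [Finset.mul_sum]
    _ = ∑ u ∈ f.support, coeff u f * (if u.support = S then 1 else 0) := by
        refine Finset.sum_congr rfl fun u hu => ?_
        congr 1
        rw [← inner_alt_sum S u.support (hf u hu), Finset.sum_filter]
        exact Finset.sum_congr rfl fun H _ => by
          split <;> simp
    _ = ∑ u ∈ f.support.filter (fun u => u.support = S), coeff u f := by
        rw [Finset.sum_filter]
        exact Finset.sum_congr rfl fun u _ => by split <;> simp

theorem exists_perm_compl_first (S : Finset (Fin n)) :
    ∃ σ : Equiv.Perm (Fin n), ∀ i j : Fin n, σ i ∉ S → σ j ∈ S → i < j := by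
  classical
  set f : Fin n → Bool := fun i => decide (i ∈ S) with hf
  refine ⟨Tuple.sort f, fun i j hi hj => ?_⟩
  by_contra h
  push_neg at h
  have hm := Tuple.monotone_sort f h
  simp only [Function.comp_apply, hf] at hm
  rw [decide_eq_true hj] at hm
  exact hi (of_decide_eq_true (Bool.le_iff_imp.mp hm rfl))

/-- If `S` is shattered then `x_S` is a standard monomial for a lex order in which
the variables outside `S` are most significant. -/
theorem shattered_mem_stdMon {σ : Equiv.Perm (Fin n)} {lin : LinearOrder (Mon n)}
    (hlex : IsLexOrder σ lin) {𝓕 : Finset (Finset (Fin n))} {S : Finset (Fin n)}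
    (hsh : _root_.Shatters 𝓕 S) (hσ : ∀ i j : Fin n, σ i ∉ S → σ j ∈ S → i < j) :
    setMon S ∈ stdMon lin (vanishIdeal
      ((𝓕.image (charVec F) : Finset (Fin n → F)) : Set (Fin n → F))) := by
  rintro ⟨f, hfI, hf0, hlead⟩
  -- all monomials of f use only variables in S
  have hsupp : ∀ u ∈ f.support, u.support ⊆ S := by
    intro u hu i hi
    rw [Finsupp.mem_support_iff] at hi
    by_contra hiS
    have hle : lin.le u (setMon S) := hlead.2 u hu
    rcases (linLe_iff lin).mp hle with heq | hlt
    · rw [heq, setMon_apply, if_neg hiS] at hi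
      exact hi rfl
    · obtain ⟨j, hj, he⟩ := (hlex u (setMon S)).mp hlt
      have hjS : σ j ∈ S := by
        by_contra hc
        rw [setMon_apply, if_neg hc] at hj
        omega
      have hij : σ.symm i < j := hσ (σ.symm i) j (by simpa using hiS) hjS
      have := he (σ.symm i) hij
      rw [Equiv.apply_symm_apply, setMon_apply, if_neg hiS] at this
      exact hi this
  -- the only monomial of f with full support is setMon S
  have huniq : ∀ u ∈ f.support, u.support = S → u = setMon S := by
    intro u hu hus
    by_contra hne
    have hlt := linLt_of_le_ne lin (hlead.2 u hu) hne
    obtain ⟨j, hj, -⟩ := (hlex u (setMon S)).mp hlt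
    have hjS : σ j ∈ S := by
      by_contra hc
      rw [setMon_apply, if_neg hc] at hj
      omega
    rw [setMon_apply, if_pos hjS] at hj
    have : σ j ∉ u.support := by
      rw [Finsupp.mem_support_iff]
      omega
    rw [hus] at this
    exact this hjS
  -- the filtered sum is the leading coefficient
  have hfilter : f.support.filter (fun u => u.support = S) = {setMon S} := by
    ext u
    simp only [Finset.mem_filter, Finset.mem_singleton]
    constructor
    · rintro ⟨hu, hus⟩
      exact huniq u hu hus
    · rintro rfl
      exact ⟨hlead.1, setMon_support S⟩
  -- each evaluation at a subcube point vanishes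
  have heval0 : ∀ H ∈ S.powerset, eval (charVec F H) f = 0 := by
    intro H hH
    rw [Finset.mem_powerset] at hH
    obtain ⟨Fm, hFm, hFmS⟩ := hsh H hH
    have hagree : eval (charVec F H) f = eval (charVec F Fm) f := by
      rw [MvPolynomial.eval_eq, MvPolynomial.eval_eq]
      refine Finset.sum_congr rfl fun u hu => ?_
      congr 1
      refine Finset.prod_congr rfl fun i hi => ?_
      have hiS : i ∈ S := hsupp u hu hi
      have : (i ∈ H) = (i ∈ Fm) := by
        rw [← hFmS]
        simp [Finset.mem_inter, hiS]
      simp only [charVec, this]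
    rw [hagree]
    exact hfI _ (mem_image_charVec.mpr ⟨Fm, hFm, rfl⟩)
  have halt := alt_sum_eval S f hsupp
  rw [hfilter, Finset.sum_singleton] at halt
  rw [Finset.sum_congr rfl (fun H hH => by rw [heval0 H hH, mul_zero])] at halt
  rw [Finset.sum_const_zero] at halt
  exact MvPolynomial.mem_support_iff.mp hlead.1 halt.symm

end Aux5
section Aux6
open Finset
open scoped Classical

variable {n : ℕ} {F : Type*} [Field F]

theorem linLt_of_le_of_lt {α : Type*} (lin : LinearOrder α) {a b c : α}
    (h1 : lin.le a b) (h2 : lin.lt b c) : lin.lt a c := by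
  letI := lin
  exact lt_of_le_of_lt h1 h2

theorem setMon_support_le (u : Mon n) : setMon u.support ≤ u := by
  intro i
  rw [setMon_apply]
  split
  · rename_i h
    exact Finsupp.mem_support_iff.mp h |> Nat.pos_of_ne_zero
  · exact Nat.zero_le _

theorem support_one_sub_X (i : Fin n) :
    (1 - X i : MvPolynomial (Fin n) F).support ⊆ {Finsupp.single i 1, 0} := by
  intro u hu
  have : (1 - X i : MvPolynomial (Fin n) F) = -(X i - 1) := by ring
  rw [this] at hu
  rw [MvPolynomial.support_neg] at hu
  exact support_X_sub_one i hu

/-- Expansion of the evaluation of a polynomial as combination of monomial evaluations. -/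
theorem eval_expand (v : Fin n → F) (g : MvPolynomial (Fin n) F) :
    eval v g = ∑ u ∈ g.support, coeff u g * eval v (monomial u (1:F)) := by
  rw [MvPolynomial.eval_eq]
  refine Finset.sum_congr rfl fun u _ => ?_
  rw [eval_monomial]
  rw [one_mul, Finsupp.prod]

/-- Monomial evaluations at 0/1 points only see the support. -/
theorem eval_monomial_setMon {v : Fin n → F} (hv : Is01 v) (u : Mon n) :
    eval v (monomial u (1:F)) = eval v (monomial (setMon u.support) (1:F)) := by
  rw [eval_monomial_01 hv, eval_monomial_01 hv, setMon_support]

/-- The standard monomials of the vanishing ideal, as a finite set of the right size. -/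
theorem stdMonFinset_card {lin : LinearOrder (Mon n)} (hlin : IsTermOrder lin)
    (𝓕 : Finset (Finset (Fin n))) :
    ∃ SmF : Finset (Mon n),
      (↑SmF : Set (Mon n)) = stdMon lin (vanishIdeal
        ((𝓕.image (charVec F) : Finset (Fin n → F)) : Set (Fin n → F))) ∧
      SmF.card = 𝓕.card := by
  set V : Finset (Fin n → F) := 𝓕.image (charVec F) with hV
  set I := vanishIdeal ((V : Finset (Fin n → F)) : Set (Fin n → F)) with hI
  set allSF : Finset (Mon n) := (univ : Finset (Finset (Fin n))).image setMon with hallSF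
  set SmF : Finset (Mon n) := allSF.filter (fun m => m ∈ stdMon lin I) with hSmF
  have hcoe : (↑SmF : Set (Mon n)) = stdMon lin I := by
    ext m
    simp only [hSmF, Finset.coe_filter, Set.mem_setOf_eq, Finset.mem_image]
    constructor
    · rintro ⟨-, h⟩; exact h
    · intro h
      refine ⟨?_, h⟩
      obtain ⟨S, -, hS⟩ := stdMon_subset_shattered hlin 𝓕 h
      rw [hallSF]
      exact Finset.mem_image.mpr ⟨S, Finset.mem_univ S, hS⟩
  refine ⟨SmF, hcoe, ?_⟩
  -- the evaluation functions
  set W := ({v // v ∈ V} → F) with hW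
  set φ : Mon n → W := fun m v => eval (v : Fin n → F) (monomial m (1:F)) with hφ
  have hv01 : ∀ v : {v // v ∈ V}, Is01 (v : Fin n → F) := by
    rintro ⟨v, hv⟩
    obtain ⟨Fm, -, rfl⟩ := Finset.mem_image.mp hv
    exact charVec_is01 Fm
  -- functions of polynomials in the ideal vanish
  have hIzero : ∀ g ∈ I, ∀ v : {v // v ∈ V}, eval (v : Fin n → F) g = 0 := by
    intro g hg v
    exact hg (v : Fin n → F) (by exact_mod_cast v.2)
  -- linear independence
  have hindep : LinearIndependent F (fun m : {m // m ∈ SmF} => φ (m : Mon n)) := by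
    rw [Fintype.linearIndependent_iff]
    intro g hg i0
    by_contra hg0
    set p : MvPolynomial (Fin n) F :=
      ∑ i : {m // m ∈ SmF}, monomial (i : Mon n) (g i) with hp
    have hcoeffp : ∀ i : {m // m ∈ SmF}, coeff (i : Mon n) p = g i := by
      intro i
      rw [hp, MvPolynomial.coeff_sum]
      rw [Finset.sum_eq_single i]
      · rw [MvPolynomial.coeff_monomial, if_pos rfl]
      · intro j _ hji
        rw [MvPolynomial.coeff_monomial,
          if_neg (fun hc => hji (Subtype.ext hc))]
      · intro h
        exact absurd (Finset.mem_univ i) h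
    have hsuppp : p.support ⊆ SmF := by
      intro u hu
      rw [MvPolynomial.mem_support_iff, hp, MvPolynomial.coeff_sum] at hu
      by_contra hc
      apply hu
      apply Finset.sum_eq_zero
      intro i _
      rw [MvPolynomial.coeff_monomial]
      refine if_neg fun h : (i : Mon n) = u => hc ?_
      rw [← h]
      exact i.2
    have hpI : p ∈ I := by
      rw [hI, mem_vanishIdeal_iff]
      intro v hv
      have hv' : v ∈ V := by exact_mod_cast hv
      calc (eval v) p = (∑ i : {m // m ∈ SmF}, g i • φ (i : Mon n)) ⟨v, hv'⟩ := by
            rw [hp, map_sum, Finset.sum_apply]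
            refine Finset.sum_congr rfl fun i _ => ?_
            rw [Pi.smul_apply, smul_eq_mul, hφ]
            simp only
            rw [eval_monomial, eval_monomial]
            ring
        _ = 0 := by rw [hg]; rfl
    have hpne : p ≠ 0 := by
      intro hc
      apply hg0
      rw [← hcoeffp i0, hc]
      simp
    have hsuppne : p.support.Nonempty := by
      rw [Finset.nonempty_iff_ne_empty]
      intro hc
      exact hpne (MvPolynomial.support_eq_empty.mp hc)
    obtain ⟨mx, hmx, hmax⟩ := exists_linMax lin hsuppne
    have hmxSm : mx ∈ stdMon lin I := by
      rw [← hcoe]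
      exact_mod_cast hsuppp hmx
    exact hmxSm ⟨p, hpI, hpne, hmx, hmax⟩
  -- spanning
  set Sp := Submodule.span F (Set.range fun m : {m // m ∈ SmF} => φ (m : Mon n)) with hSp
  have hrank : ∀ T : Finset (Fin n), φ (setMon T) ∈ Sp := by
    set rank : Finset (Fin n) → ℕ := fun T =>
      ((univ : Finset (Finset (Fin n))).filter
        (fun T' => lin.lt (setMon T') (setMon T))).card with hrank
    have hrank_lt : ∀ T T' : Finset (Fin n), lin.lt (setMon T') (setMon T) →
        rank T' < rank T := by
      intro T T' hlt
      apply Finset.card_lt_card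
      rw [Finset.ssubset_def]
      constructor
      · intro x hx
        rw [Finset.mem_filter] at hx ⊢
        exact ⟨hx.1, linLt_of_le_of_lt lin (linLe_of_lt lin hx.2) hlt⟩
      · intro hsub
        have hmem := hsub (Finset.mem_filter.mpr ⟨Finset.mem_univ T', hlt⟩)
        rw [Finset.mem_filter] at hmem
        exact (linLt_ne lin hmem.2) rfl
    have main : ∀ N : ℕ, ∀ T : Finset (Fin n), rank T < N → φ (setMon T) ∈ Sp := by
      intro N
      induction N with
      | zero => intro T h; exact absurd h (Nat.not_lt_zero _)
      | succ N ih =>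
        intro T hT
        by_cases hstd : setMon T ∈ stdMon lin I
        · apply Submodule.subset_span
          refine ⟨⟨setMon T, ?_⟩, rfl⟩
          rw [hSmF, Finset.mem_filter]
          exact ⟨Finset.mem_image.mpr ⟨T, Finset.mem_univ T, rfl⟩, hstd⟩
        · rw [stdMon, Set.mem_setOf_eq, not_not] at hstd
          obtain ⟨f, hfI, hfne, hflead⟩ := hstd
          set c := coeff (setMon T) f with hc
          have hcne : c ≠ 0 := MvPolynomial.mem_support_iff.mp hflead.1
          have hkey : φ (setMon T) = ∑ u ∈ f.support.erase (setMon T),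
              (-(c⁻¹ * coeff u f)) • φ (setMon u.support) := by
            funext v
            have hez := hIzero f hfI v
            rw [_root_.eval_expand] at hez
            rw [← Finset.insert_erase hflead.1, Finset.sum_insert
              (Finset.notMem_erase _ _)] at hez
            have : ∀ u ∈ f.support.erase (setMon T),
                coeff u f * eval (v : Fin n → F) (monomial u (1:F))
                = coeff u f * φ (setMon u.support) v := by
              intro u _
              rw [hφ]
              simp only
              rw [← eval_monomial_setMon (hv01 v) u]
            rw [Finset.sum_congr rfl this] at hez
            have hA : c * φ (setMon T) v = - ∑ u ∈ f.support.erase (setMon T),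
                coeff u f * φ (setMon u.support) v := by
              refine eq_neg_of_add_eq_zero_left ?_
              rw [← hez]
            have hB : φ (setMon T) v = c⁻¹ * (- ∑ u ∈ f.support.erase (setMon T),
                coeff u f * φ (setMon u.support) v) := by
              rw [← hA, inv_mul_cancel_left₀ hcne]
            rw [hB, Finset.sum_apply]
            rw [mul_neg, Finset.mul_sum, ← Finset.sum_neg_distrib]
            refine Finset.sum_congr rfl fun u _ => ?_
            rw [Pi.smul_apply, smul_eq_mul]
            ring
          rw [hkey]
          apply Submodule.sum_mem
          intro u hu
          apply Submodule.smul_mem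
          apply ih
          have h1 : lin.lt u (setMon T) :=
            linLt_of_le_ne lin (hflead.2 u (Finset.mem_of_mem_erase hu))
              (Finset.ne_of_mem_erase hu)
          have h2 : lin.lt (setMon u.support) (setMon T) :=
            linLt_of_le_of_lt lin (hlin.le_of_le (setMon_support_le u)) h1
          have := hrank_lt T u.support h2
          omega
    intro T
    exact main (rank T + 1) T (Nat.lt_succ_self _)
  have hspan : Sp = ⊤ := by
    rw [← top_le_iff]
    rw [← (Pi.basisFun F {v // v ∈ V}).span_eq]
    rw [Submodule.span_le]
    rintro - ⟨v0, rfl⟩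
    obtain ⟨Fm, hFm, hvFm⟩ := Finset.mem_image.mp v0.2
    set P : MvPolynomial (Fin n) F :=
      ∏ i ∈ (univ : Finset (Fin n)),
        (if i ∈ Fm then X i else (1 - X i : MvPolynomial (Fin n) F)) with hP
    have hPsupp : ∀ m ∈ P.support, m ≤ setMon (univ : Finset (Fin n)) := by
      have := prod_factor_bound (univ : Finset (Fin n))
        (fun i => if i ∈ Fm then X i else (1 - X i : MvPolynomial (Fin n) F)) (fun i _ => by
          by_cases hi : i ∈ Fm
          · simp only [if_pos hi]
            rw [MvPolynomial.support_X]
            intro u hu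
            simp only [Finset.mem_singleton] at hu
            simp [hu]
          · simp only [if_neg hi]
            exact support_one_sub_X i)
      exact this.1
    have hPeval : ∀ G : Finset (Fin n), eval (charVec F G) P
        = if G = Fm then 1 else 0 := by
      intro G
      rw [hP, map_prod]
      by_cases hG : G = Fm
      · subst hG
        rw [if_pos rfl]
        apply Finset.prod_eq_one
        intro i _
        by_cases hi : i ∈ G
        · rw [if_pos hi, eval_X, charVec, if_pos hi]
        · rw [if_neg hi, map_sub, map_one, eval_X, charVec, if_neg hi, sub_zero]
      · rw [if_neg hG]
        have : ∃ i, (i ∈ G ∧ i ∉ Fm) ∨ (i ∈ Fm ∧ i ∉ G) := by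
          by_contra hcon
          push_neg at hcon
          apply hG
          ext i
          have := hcon i
          tauto
        obtain ⟨i, hi⟩ := this
        apply Finset.prod_eq_zero (Finset.mem_univ i)
        rcases hi with ⟨h1, h2⟩ | ⟨h1, h2⟩
        · rw [if_neg h2, map_sub, map_one, eval_X, charVec, if_pos h1, sub_self]
        · rw [if_pos h1, eval_X, charVec, if_neg h2]
      -- done
    have hPfun : (fun w : {v // v ∈ V} => eval (w : Fin n → F) P) = Pi.single v0 1 := by
      funext w
      obtain ⟨G, hG, hwG⟩ := Finset.mem_image.mp w.2
      rw [← hwG, hPeval G]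
      by_cases hGF : G = Fm
      · rw [if_pos hGF]
        have : w = v0 := Subtype.ext (by rw [← hwG, ← hvFm, hGF])
        rw [this, Pi.single_eq_same]
      · rw [if_neg hGF]
        have : w ≠ v0 := by
          intro hc
          apply hGF
          apply charVec_injective (F := F)
          rw [hwG, hvFm, hc]
        rw [Pi.single_eq_of_ne this]
    rw [Pi.basisFun_apply, ← hPfun]
    have hPexp : (fun w : {v // v ∈ V} => eval (w : Fin n → F) P)
        = ∑ u ∈ P.support, coeff u P • φ u := by
      funext w
      rw [_root_.eval_expand, Finset.sum_apply]
      refine Finset.sum_congr rfl fun u _ => ?_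
      rw [Pi.smul_apply, smul_eq_mul]
    rw [hPexp]
    apply Submodule.sum_mem
    intro u hu
    apply Submodule.smul_mem
    have hu' := eq_setMon_of_le (hPsupp u hu)
    rw [hu'.1]
    exact hrank u.support
  -- conclude with dimensions
  have hVcard : V.card = 𝓕.card := Finset.card_image_of_injective 𝓕 charVec_injective
  have hb : Module.Basis {m // m ∈ SmF} F W := Module.Basis.mk hindep hspan.ge
  have h1 : Module.finrank F W = SmF.card := by
    rw [Module.finrank_eq_card_basis hb, Fintype.card_coe]
  have h2 : Module.finrank F W = V.card := by
    have h3 : Module.finrank F W = Fintype.card {v // v ∈ V} :=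
      Module.finrank_fintype_fun_eq_card F
    rw [h3, Fintype.card_coe]
  omega

end Aux6
section Assembly
open Finset
open scoped Classical

variable {n : ℕ} {F : Type*} [Field F]

theorem stdMon_eq_of_extremal (𝓕 : Finset (Finset (Fin n))) (hex : IsSExtremal 𝓕)
    {lin : LinearOrder (Mon n)} (hlin : IsTermOrder lin) :
    stdMon lin (vanishIdeal ((𝓕.image (charVec F) : Finset (Fin n → F)) : Set (Fin n → F)))
      = ↑((shatteredFamily 𝓕).image setMon) := by
  obtain ⟨SmF, hcoe, hcard⟩ := stdMonFinset_card (F := F) hlin 𝓕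
  have hsub : SmF ⊆ (shatteredFamily 𝓕).image setMon := by
    intro m hm
    have hm' : m ∈ stdMon lin (vanishIdeal
        ((𝓕.image (charVec F) : Finset (Fin n → F)) : Set (Fin n → F))) := by
      rw [← hcoe]; exact_mod_cast hm
    obtain ⟨S, hSsh, hSm⟩ := stdMon_subset_shattered hlin 𝓕 hm'
    exact Finset.mem_image.mpr ⟨S, Finset.mem_filter.mpr ⟨Finset.mem_univ _, hSsh⟩, hSm⟩
  have hAcard : ((shatteredFamily 𝓕).image setMon).card = (shatteredFamily 𝓕).card :=
    Finset.card_image_of_injective _ setMon_injective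
  have hexc : (shatteredFamily 𝓕).card = 𝓕.card := hex
  have heq : SmF = (shatteredFamily 𝓕).image setMon :=
    Finset.eq_of_subset_of_card_le hsub (by omega)
  rw [← hcoe, heq]

theorem extremal_of_lex_invariant (𝓕 : Finset (Finset (Fin n)))
    (hinv : ∀ (σ₁ σ₂ : Equiv.Perm (Fin n)) (lin₁ lin₂ : LinearOrder (Mon n)),
      IsLexOrder σ₁ lin₁ → IsLexOrder σ₂ lin₂ →
        stdMon lin₁ (vanishIdeal ((𝓕.image (charVec F) : Finset (Fin n → F)) :
            Set (Fin n → F))) =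
          stdMon lin₂ (vanishIdeal ((𝓕.image (charVec F) : Finset (Fin n → F)) :
            Set (Fin n → F)))) :
    IsSExtremal 𝓕 := by
  have hterm0 := (isLexOrder_lexLin (1 : Equiv.Perm (Fin n))).isTermOrder
  obtain ⟨SmF, hcoe, hcard⟩ := stdMonFinset_card (F := F) hterm0 𝓕
  have hsub : SmF ⊆ (shatteredFamily 𝓕).image setMon := by
    intro m hm
    have hm' : m ∈ stdMon (lexLin 1) (vanishIdeal
        ((𝓕.image (charVec F) : Finset (Fin n → F)) : Set (Fin n → F))) := by
      rw [← hcoe]; exact_mod_cast hm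
    obtain ⟨S, hSsh, hSm⟩ := stdMon_subset_shattered hterm0 𝓕 hm'
    exact Finset.mem_image.mpr ⟨S, Finset.mem_filter.mpr ⟨Finset.mem_univ _, hSsh⟩, hSm⟩
  have hsup : (shatteredFamily 𝓕).image setMon ⊆ SmF := by
    intro m hm
    obtain ⟨S, hS, rfl⟩ := Finset.mem_image.mp hm
    have hSsh : _root_.Shatters 𝓕 S := (Finset.mem_filter.mp hS).2
    obtain ⟨σ, hσ⟩ := exists_perm_compl_first S
    have hmem := shattered_mem_stdMon (F := F) (isLexOrder_lexLin σ) hSsh hσ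
    rw [hinv σ 1 (lexLin σ) (lexLin 1) (isLexOrder_lexLin σ) (isLexOrder_lexLin 1)] at hmem
    rw [← hcoe] at hmem
    exact_mod_cast hmem
  have heq : SmF = (shatteredFamily 𝓕).image setMon := Finset.Subset.antisymm hsub hsup
  have hAcard : ((shatteredFamily 𝓕).image setMon).card = (shatteredFamily 𝓕).card :=
    Finset.card_image_of_injective _ setMon_injective
  show (shatteredFamily 𝓕).card = 𝓕.card
  rw [← hAcard, ← heq, hcard]

end Assembly

open scoped Classical in
/-- Proposition `extr<=>smua`.
A set system `𝓕 ⊆ 2^[n]` is shattering-extremal if and only if the standard monomials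
of `I(𝓕) ⊴ 𝔽[x]` are the same for every lexicographic term order (equivalently, for
every term order). -/
theorem sExtremal_iff_stdMon_invariant {n : ℕ} {F : Type*} [Field F]
    (𝓕 : Finset (Finset (Fin n))) :
    (IsSExtremal 𝓕 ↔
      ∀ (σ₁ σ₂ : Equiv.Perm (Fin n)) (lin₁ lin₂ : LinearOrder (Mon n)),
        IsLexOrder σ₁ lin₁ → IsLexOrder σ₂ lin₂ →
          stdMon lin₁ (vanishIdeal ((𝓕.image (charVec F) : Finset (Fin n → F)) :
              Set (Fin n → F))) =
            stdMon lin₂ (vanishIdeal ((𝓕.image (charVec F) : Finset (Fin n → F)) :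
              Set (Fin n → F)))) ∧
    (IsSExtremal 𝓕 ↔
      ∀ lin₁ lin₂ : LinearOrder (Mon n), IsTermOrder lin₁ → IsTermOrder lin₂ →
        stdMon lin₁ (vanishIdeal ((𝓕.image (charVec F) : Finset (Fin n → F)) :
            Set (Fin n → F))) =
          stdMon lin₂ (vanishIdeal ((𝓕.image (charVec F) : Finset (Fin n → F)) :
            Set (Fin n → F)))) := by
  classical
  constructor
  · constructor
    · intro hex σ₁ σ₂ lin₁ lin₂ h1 h2
      rw [stdMon_eq_of_extremal 𝓕 hex h1.isTermOrder,
        stdMon_eq_of_extremal 𝓕 hex h2.isTermOrder]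
    · intro hinv
      exact extremal_of_lex_invariant 𝓕 hinv
  · constructor
    · intro hex lin₁ lin₂ h1 h2
      rw [stdMon_eq_of_extremal 𝓕 hex h1, stdMon_eq_of_extremal 𝓕 hex h2]
    · intro hinv
      exact extremal_of_lex_invariant 𝓕 fun σ₁ σ₂ lin₁ lin₂ h1 h2 =>
        hinv lin₁ lin₂ h1.isTermOrder h2.isTermOrder
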